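/- Suppose E[f(S)] = p·T for some T ≥ 0, E[f(S∪OPT)] and E[f(Q)] satisfy f(S) > f(Q)/(1+ε) pointwise, and E[f(Q)] ≥ E[f(S∪OPT)] − (Pr_max/((1−ε)·p))·E[f(S)] where Pr_max = max(pk, 1−p) with 0 < ε < 1, 0 < p < 1, k ≥ 1. Then E[f(S)] > [(1−ε)p / ((1−ε²)p + Pr_max)] · E[f(S∪OPT)]. -/
import Mathlib


open MeasureTheory ProbabilityTheory

/-- combining the expectation inequalities of Lemmas 1-3. -/
theorem combine_expectation_inequalities
    {Ω : Type*} [MeasureSpace Ω] [IsProbabilityMeasure (ℙ : Measure Ω)]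
    (fS fQ fSO : Ω → ℝ)
    (hfSnn : ∀ ω, 0 ≤ fS ω) (hfQnn : ∀ ω, 0 ≤ fQ ω) (hfSOnn : ∀ ω, 0 ≤ fSO ω)
    (hintS : Integrable fS ℙ) (hintQ : Integrable fQ ℙ) (hintSO : Integrable fSO (ℙ : Measure Ω))
    (ε p : ℝ) (hε0 : 0 < ε) (hε1 : ε < 1) (hp0 : 0 < p) (hp1 : p < 1)
    (k : ℕ) (hk : 1 ≤ k)
    (T : ℝ) (hT : 0 ≤ T) (hES : (∫ ω, fS ω) = p * T)
    (hpoint : ∀ ω, fQ ω / (1 + ε) < fS ω)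
    (hEQ : (∫ ω, fSO ω) - (max (p * k) (1 - p) / ((1 - ε) * p)) * ∫ ω, fS ω
            ≤ ∫ ω, fQ ω) :
    ((1 - ε) * p / ((1 - ε ^ 2) * p + max (p * k) (1 - p))) * ∫ ω, fSO ω
      < ∫ ω, fS ω := by
  set M := max (p * (k:ℝ)) (1 - p) with hM
  have hM0 : 0 < M := lt_of_lt_of_le (by linarith) (le_max_right _ _)
  have h1e : (0:ℝ) < 1 + ε := by linarith
  have h1e' : (0:ℝ) < 1 - ε := by linarith
  have hg : ∀ ω, 0 < fS ω - fQ ω / (1 + ε) := fun ω => sub_pos.mpr (hpoint ω)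
  have hgint : Integrable (fun ω => fS ω - fQ ω / (1 + ε)) ℙ :=
    hintS.sub (hintQ.div_const _)
  have hpos : 0 < ∫ ω, (fS ω - fQ ω / (1 + ε)) := by
    rw [integral_pos_iff_support_of_nonneg_ae
      (Filter.Eventually.of_forall fun ω => (hg ω).le) hgint]
    have hs : Function.support (fun ω => fS ω - fQ ω / (1 + ε)) = Set.univ := by
      ext ω; simp [Function.support, (hg ω).ne']
    rw [hs]; simp
  rw [integral_sub hintS (hintQ.div_const _), integral_div, sub_pos,
    div_lt_iff₀ h1e] at hpos
  set S := ∫ ω, fS ω with hS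
  set Q := ∫ ω, fQ ω with hQ
  set O := ∫ ω, fSO ω with hO
  have hD : 0 < (1 - ε ^ 2) * p + M := by nlinarith [mul_pos (mul_pos h1e h1e') hp0]
  have hden : 0 < (1 - ε) * p := by positivity
  rw [div_mul_eq_mul_div, div_lt_iff₀ hD]
  have hSO : O < S * (1 + ε) + M / ((1 - ε) * p) * S := by linarith
  have h2 : M / ((1 - ε) * p) * S * ((1 - ε) * p) = M * S := by
    field_simp
  nlinarith [mul_lt_mul_of_pos_right hSO hden, h2]
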